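/- Let d ≥ 1 and let U ⊆ ℝ^d be open. Let Γ : U → (Fin d → Fin d → Fin d → ℝ) be torsion-free Christoffel symbols (Γ^c_{ab} = Γ^c_{ba} pointwise), let q : U → Matrix (Fin d) (Fin d) ℝ be a differentiable symmetric-matrix-valued field with vanishing covariant derivative, i.e. ∂_c q_{ab} − ∑_e Γ^e_{ca} q_{eb} − ∑_e Γ^e_{cb} q_{ae} = 0 on U for all indices a,b,c, and let ℓ : U → ℝ^d be a differentiable vector field with ∑_b q_{ab} ℓ^b = 0 on U for all a. Then the Lie derivative of q along ℓ vanishes: for all a,b and all points of U, ∑_c ℓ^c ∂_c q_{ab} + ∑_c q_{cb} ∂_a ℓ^c + ∑_c q_{ac} ∂_b ℓ^c = 0. -/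

import Mathlib

/-- The `a`-th partial (Fréchet) derivative of a function `g : ℝ^d → ℝ` at `x`. -/
noncomputable def pderiv' {d : ℕ} (a : Fin d) (g : (Fin d → ℝ) → ℝ)
    (x : Fin d → ℝ) : ℝ :=
  fderiv ℝ g x (Pi.single a 1)

/-- Coordinate form of the paper's Lemma on abstract non-expanding null surface
geometry: if a torsion-free connection `Γ` annihilates the symmetric 2-tensor `q`
(`∇_c q_{ab} = 0`) and the vector field `ℓ` satisfies `q_{ab} ℓ^b = 0`, then the
Lie derivative of `q` along `ℓ` vanishes:
`ℓ^c ∂_c q_{ab} + q_{cb} ∂_a ℓ^c + q_{ac} ∂_b ℓ^c = 0` on `U`. -/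
theorem stmt_15 (d : ℕ) (hd : 1 ≤ d) (U : Set (Fin d → ℝ)) (hU : IsOpen U)
    (Γ : (Fin d → ℝ) → Fin d → Fin d → Fin d → ℝ)
    (q : (Fin d → ℝ) → Fin d → Fin d → ℝ)
    (ℓ : (Fin d → ℝ) → Fin d → ℝ)
    (hΓtf : ∀ x ∈ U, ∀ c a b : Fin d, Γ x c a b = Γ x c b a)
    (hqsymm : ∀ x ∈ U, ∀ a b : Fin d, q x a b = q x b a)
    (hqdiff : ∀ a b : Fin d, ∀ x ∈ U, DifferentiableAt ℝ (fun y => q y a b) x)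
    (hℓdiff : ∀ b : Fin d, ∀ x ∈ U, DifferentiableAt ℝ (fun y => ℓ y b) x)
    (hcov : ∀ x ∈ U, ∀ c a b : Fin d,
      pderiv' c (fun y => q y a b) x - (∑ e, Γ x e c a * q x e b)
        - (∑ e, Γ x e c b * q x a e) = 0)
    (hnull : ∀ x ∈ U, ∀ a : Fin d, (∑ b, q x a b * ℓ x b) = 0) :
    ∀ x ∈ U, ∀ a b : Fin d,
      (∑ c, ℓ x c * pderiv' c (fun y => q y a b) x)
        + (∑ c, q x c b * pderiv' a (fun y => ℓ y c) x)
        + (∑ c, q x a c * pderiv' b (fun y => ℓ y c) x) = 0 := by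
  intro x hx a b
  -- covariant constancy rewritten as an expression for ∂q
  have hdq : ∀ c a b : Fin d, pderiv' c (fun y => q y a b) x
      = (∑ e, Γ x e c a * q x e b) + (∑ e, Γ x e c b * q x a e) := by
    intro c a b; have := hcov x hx c a b; linarith
  -- differentiate the null condition
  have hkey : ∀ a b : Fin d, (∑ c, q x b c * pderiv' a (fun y => ℓ y c) x)
      = - ∑ c, ℓ x c * pderiv' a (fun y => q y b c) x := by
    intro a b
    have hf : HasFDerivAt (fun y => ∑ c, q y b c * ℓ y c)
        (∑ c, (q x b c • fderiv ℝ (fun y => ℓ y c) x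
          + ℓ x c • fderiv ℝ (fun y => q y b c) x)) x := by
      apply HasFDerivAt.fun_sum
      intro c _
      exact ((hqdiff b c x hx).hasFDerivAt.mul (hℓdiff c x hx).hasFDerivAt)
    have hzero : fderiv ℝ (fun y => ∑ c, q y b c * ℓ y c) x = 0 := by
      have hEq : (fun y => ∑ c, q y b c * ℓ y c) =ᶠ[nhds x] (fun _ => (0:ℝ)) := by
        filter_upwards [hU.mem_nhds hx] with y hy
        exact hnull y hy b
      rw [Filter.EventuallyEq.fderiv_eq hEq]
      exact fderiv_const_apply 0
    have h := hf.fderiv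
    rw [hzero] at h
    have happ := congrArg (fun L : (Fin d → ℝ) →L[ℝ] ℝ => L (Pi.single a 1)) h
    simp only [ContinuousLinearMap.sum_apply, ContinuousLinearMap.add_apply,
      ContinuousLinearMap.smul_apply, ContinuousLinearMap.zero_apply,
      smul_eq_mul] at happ
    simp only [pderiv']
    linarith [Finset.sum_add_distrib (s := (Finset.univ : Finset (Fin d)))
      (f := fun c => q x b c * (fderiv ℝ (fun y => ℓ y c) x) (Pi.single a 1))
      (g := fun c => ℓ x c * (fderiv ℝ (fun y => q y b c) x) (Pi.single a 1)),
      happ]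
  -- rewrite the three Lie-derivative terms
  have h2 : (∑ c, q x c b * pderiv' a (fun y => ℓ y c) x)
      = - ∑ c, ℓ x c * pderiv' a (fun y => q y b c) x := by
    rw [← hkey a b]
    exact Finset.sum_congr rfl fun c _ => by rw [hqsymm x hx c b]
  have h3 : (∑ c, q x a c * pderiv' b (fun y => ℓ y c) x)
      = - ∑ c, ℓ x c * pderiv' b (fun y => q y a c) x := hkey b a
  rw [h2, h3]
  have : (∑ c, ℓ x c * pderiv' c (fun y => q y a b) x)
      + -(∑ c, ℓ x c * pderiv' a (fun y => q y b c) x)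
      + -(∑ c, ℓ x c * pderiv' b (fun y => q y a c) x)
      = ∑ c, ℓ x c * (pderiv' c (fun y => q y a b) x
          - pderiv' a (fun y => q y b c) x - pderiv' b (fun y => q y a c) x) := by
    simp only [mul_sub, Finset.sum_sub_distrib]
    ring
  rw [this]
  have hinner : ∀ c : Fin d,
      pderiv' c (fun y => q y a b) x - pderiv' a (fun y => q y b c) x
        - pderiv' b (fun y => q y a c) x
      = -(2 * ∑ e, Γ x e a b * q x e c) := by
    intro c
    rw [hdq c a b, hdq a b c, hdq b a c]
    have e1 : (∑ e, Γ x e c a * q x e b) = ∑ e, Γ x e a c * q x b e :=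
      Finset.sum_congr rfl fun e _ => by rw [hΓtf x hx e c a, hqsymm x hx e b]
    have e2 : (∑ e, Γ x e c b * q x a e) = ∑ e, Γ x e b c * q x a e :=
      Finset.sum_congr rfl fun e _ => by rw [hΓtf x hx e c b]
    have e3 : (∑ e, Γ x e b a * q x e c) = ∑ e, Γ x e a b * q x e c :=
      Finset.sum_congr rfl fun e _ => by rw [hΓtf x hx e b a]
    rw [e1, e2, e3]
    ring
  calc (∑ c, ℓ x c * (pderiv' c (fun y => q y a b) x
          - pderiv' a (fun y => q y b c) x - pderiv' b (fun y => q y a c) x))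
      = ∑ c, ∑ e, (-2) * (Γ x e a b * (q x e c * ℓ x c)) := by
        apply Finset.sum_congr rfl; intro c _
        rw [hinner c, show ℓ x c * -(2 * ∑ e, Γ x e a b * q x e c)
          = (-2 * ℓ x c) * ∑ e, Γ x e a b * q x e c from by ring, Finset.mul_sum]
        apply Finset.sum_congr rfl; intro e _; ring
    _ = ∑ e, ∑ c, (-2) * (Γ x e a b * (q x e c * ℓ x c)) := Finset.sum_comm
    _ = 0 := by
        apply Finset.sum_eq_zero; intro e _
        rw [← Finset.mul_sum, ← Finset.mul_sum, hnull x hx e, mul_zero, mul_zero]
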